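/- arXiv:2305.09029 — 2 statements merged into one kernel-verified Lean document; each statement's English description precedes it below -/
import Mathlib

section
/- Let {y_k}_{k≥0} be an arbitrary nonnegative real sequence and define a_k(μ) = y_k (μ)_k / ( (2μ)_k k! ) for μ > 0. Then for every μ > 0, all α, β > 0, and every integer m ≥ 0, Σ_{k=0}^{m} [ a_k(μ+α)a_{m−k}(μ+β) − a_k(μ)a_{m−k}(μ+α+β) ] ≤ 0; moreover, if y_k > 0 for all k, then this sum is strictly negative for every m ≥ 2. In other words, the formal power series y(μ;x) = Σ_{k≥0} y_k (μ)_k x^k / ( (2μ)_k k! ) is coefficient-wise log-convex in μ on (0,∞). -/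
/-- The rising factorial (Pochhammer symbol) `(μ)_n = μ(μ+1)⋯(μ+n−1)`. -/
noncomputable def risingFactorial (μ : ℝ) : ℕ → ℝ
  | 0 => 1
  | n + 1 => risingFactorial μ n * (μ + n)

/-- The coefficients `a_k(μ) = y_k (μ)_k / ((2μ)_k k!)`. -/
noncomputable def coeff (y : ℕ → ℝ) (k : ℕ) (μ : ℝ) : ℝ :=
  y k * risingFactorial μ k / (risingFactorial (2 * μ) k * (Nat.factorial k : ℝ))

open Real Finset

lemma rf_pos {s : ℝ} (hs : 0 < s) : ∀ k, 0 < risingFactorial s k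
  | 0 => by simp [risingFactorial]
  | (k+1) => by
      have := rf_pos hs k
      have : (0:ℝ) < s + k := by positivity
      simp only [risingFactorial]
      exact mul_pos (rf_pos hs k) this

noncomputable def hh (k : ℕ) (s : ℝ) : ℝ := risingFactorial s k / risingFactorial (2*s) k

lemma hh_pos {s : ℝ} (hs : 0 < s) (k : ℕ) : 0 < hh k s :=
  div_pos (rf_pos hs k) (rf_pos (by linarith) k)

lemma hh_zero (s : ℝ) : hh 0 s = 1 := by simp [hh, risingFactorial]

lemma hh_succ {s : ℝ} (hs : 0 < s) (k : ℕ) :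
    hh (k+1) s = hh k s * ((s + k)/(2*s + k)) := by
  have h1 : risingFactorial (2*s) k ≠ 0 := ne_of_gt (rf_pos (by linarith) k)
  have h2 : (2*s + (k:ℝ)) ≠ 0 := by positivity
  simp only [hh, risingFactorial]
  field_simp

lemma coeff_eq (y : ℕ → ℝ) (k : ℕ) (s : ℝ) :
    coeff y k s = (y k / (Nat.factorial k : ℝ)) * hh k s := by
  simp only [coeff, hh]
  ring

-- strict two-point AM-GM
lemma amgm_strict {x z t : ℝ} (hx : 0 < x) (hz : 0 < z) (hxz : x ≠ z)
    (ht0 : 0 < t) (ht1 : t < 1) : x ^ (1-t) * z ^ t < (1-t) * x + t * z := by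
  have h1 : x ^ (1-t) = Real.exp ((1-t) * Real.log x) := by
    rw [Real.rpow_def_of_pos hx]; ring_nf
  have h2 : z ^ t = Real.exp (t * Real.log z) := by
    rw [Real.rpow_def_of_pos hz]; ring_nf
  have hlog : Real.log x ≠ Real.log z := fun h => hxz (Real.log_injOn_pos
    (Set.mem_Ioi.mpr hx) (Set.mem_Ioi.mpr hz) h)
  have := strictConvexOn_exp.2 (Set.mem_univ (Real.log x)) (Set.mem_univ (Real.log z))
    hlog (by linarith : (0:ℝ) < 1 - t) ht0 (by ring)
  rw [Real.exp_log hx, Real.exp_log hz] at this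
  calc x ^ (1-t) * z ^ t = Real.exp ((1-t) * Real.log x + t * Real.log z) := by
        rw [h1, h2, Real.exp_add]
    _ < (1-t) * x + t * z := this

-- two-point Hölder: p^(1-t) q^t + u^(1-t) w^t ≤ (p+u)^(1-t) (q+w)^t
lemma holder2 {p q u w t : ℝ} (hp : 0 < p) (hq : 0 < q) (hu : 0 ≤ u) (hw : 0 ≤ w)
    (ht0 : 0 ≤ t) (ht1 : t ≤ 1) :
    p ^ (1-t) * q ^ t + u ^ (1-t) * w ^ t ≤ (p+u) ^ (1-t) * (q+w) ^ t := by
  have hA : (0:ℝ) < p + u := by linarith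
  have hB : (0:ℝ) < q + w := by linarith
  have h1t : (0:ℝ) ≤ 1 - t := by linarith
  have e1 : (p/(p+u)) ^ (1-t) * (q/(q+w)) ^ t ≤ (1-t) * (p/(p+u)) + t * (q/(q+w)) :=
    Real.geom_mean_le_arith_mean2_weighted h1t ht0 (by positivity) (by positivity) (by ring)
  have e2 : (u/(p+u)) ^ (1-t) * (w/(q+w)) ^ t ≤ (1-t) * (u/(p+u)) + t * (w/(q+w)) :=
    Real.geom_mean_le_arith_mean2_weighted h1t ht0 (by positivity) (by positivity) (by ring)
  have d1 : (p/(p+u)) ^ (1-t) = p ^ (1-t) / (p+u) ^ (1-t) := Real.div_rpow hp.le hA.le _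
  have d2 : (q/(q+w)) ^ t = q ^ t / (q+w) ^ t := Real.div_rpow hq.le hB.le _
  have d3 : (u/(p+u)) ^ (1-t) = u ^ (1-t) / (p+u) ^ (1-t) := Real.div_rpow hu hA.le _
  have d4 : (w/(q+w)) ^ t = w ^ t / (q+w) ^ t := Real.div_rpow hw hB.le _
  have hAp : (0:ℝ) < (p+u) ^ (1-t) := Real.rpow_pos_of_pos hA _
  have hBp : (0:ℝ) < (q+w) ^ t := Real.rpow_pos_of_pos hB _
  rw [d1, d2] at e1
  rw [d3, d4] at e2
  have sum : p ^ (1-t) / (p+u) ^ (1-t) * (q ^ t / (q+w) ^ t)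
      + u ^ (1-t) / (p+u) ^ (1-t) * (w ^ t / (q+w) ^ t) ≤ 1 := by
    have : (1-t) * (p/(p+u)) + t * (q/(q+w)) + ((1-t) * (u/(p+u)) + t * (w/(q+w))) = 1 := by
      field_simp
      ring
    linarith
  have key : p ^ (1-t) * q ^ t + u ^ (1-t) * w ^ t ≤ (p+u) ^ (1-t) * ((q+w) ^ t) := by
    have h := mul_le_mul_of_nonneg_left sum (le_of_lt (mul_pos hAp hBp))
    calc p ^ (1-t) * q ^ t + u ^ (1-t) * w ^ t
        = (p+u) ^ (1-t) * (q+w) ^ t *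
          (p ^ (1-t) / (p+u) ^ (1-t) * (q ^ t / (q+w) ^ t)
            + u ^ (1-t) / (p+u) ^ (1-t) * (w ^ t / (q+w) ^ t)) := by
          field_simp
      _ ≤ (p+u) ^ (1-t) * (q+w) ^ t * 1 := h
      _ = (p+u) ^ (1-t) * ((q+w) ^ t) := by ring
  linarith

-- X^(1-t) Y^t + X^t Y^(1-t) ≤ X + Y
lemma rearr {X Y t : ℝ} (hX : 0 < X) (hY : 0 < Y) (ht0 : 0 ≤ t) (ht1 : t ≤ 1) :
    X ^ (1-t) * Y ^ t + X ^ t * Y ^ (1-t) ≤ X + Y := by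
  have h1t : (0:ℝ) ≤ 1 - t := by linarith
  have eX : X ^ t * X ^ (1-t) = X := by
    rw [← Real.rpow_add hX]; norm_num
  have eY : Y ^ t * Y ^ (1-t) = Y := by
    rw [← Real.rpow_add hY]; norm_num
  rcases le_total X Y with h | h
  · have a1 : X ^ t ≤ Y ^ t := Real.rpow_le_rpow hX.le h ht0
    have a2 : X ^ (1-t) ≤ Y ^ (1-t) := Real.rpow_le_rpow hX.le h h1t
    nlinarith [mul_nonneg (sub_nonneg.mpr a1) (sub_nonneg.mpr a2)]
  · have a1 : Y ^ t ≤ X ^ t := Real.rpow_le_rpow hY.le h ht0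
    have a2 : Y ^ (1-t) ≤ X ^ (1-t) := Real.rpow_le_rpow hY.le h h1t
    nlinarith [mul_nonneg (sub_nonneg.mpr a1) (sub_nonneg.mpr a2)]

lemma factor_decomp {s : ℝ} (hs : 0 < s) (j : ℝ) (hj : 0 ≤ j) :
    (s + j)/(2*s + j) = 1/2 + (j/2)/(2*s + j) := by
  have : (2*s + j) ≠ 0 := by positivity
  field_simp
  ring

lemma factor_ineq {x z t : ℝ} (hx : 0 < x) (hz : 0 < z) (ht0 : 0 ≤ t) (ht1 : t ≤ 1)
    (j : ℝ) (hj : 0 ≤ j) :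
    (((1-t)*x + t*z) + j)/(2*((1-t)*x + t*z) + j)
      ≤ ((x + j)/(2*x + j)) ^ (1-t) * ((z + j)/(2*z + j)) ^ t := by
  set a := (1-t)*x + t*z with ha
  have hapos : 0 < a := by
    rcases le_total x z with h | h
    · nlinarith [mul_nonneg ht0 (by linarith : (0:ℝ) ≤ z - x)]
    · nlinarith [mul_nonneg (by linarith : (0:ℝ) ≤ 1-t) (by linarith : (0:ℝ) ≤ x - z)]
  rcases eq_or_lt_of_le hj with hj0 | hjpos
  · rw [← hj0]
    simp only [add_zero]
    have e1 : a/(2*a) = 1/2 := by field_simp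
    have e2 : x/(2*x) = 1/2 := by field_simp
    have e3 : z/(2*z) = 1/2 := by field_simp
    rw [e1, e2, e3, ← Real.rpow_add (by norm_num : (0:ℝ) < 1/2)]
    norm_num
  · have hxj : (0:ℝ) < 2*x + j := by linarith
    have hzj : (0:ℝ) < 2*z + j := by linarith
    have haj : (0:ℝ) < 2*a + j := by linarith
    have amgm : (2*x + j) ^ (1-t) * (2*z + j) ^ t ≤ 2*a + j := by
      have := Real.geom_mean_le_arith_mean2_weighted (by linarith : (0:ℝ) ≤ 1-t) ht0
        hxj.le hzj.le (by ring)
      calc (2*x + j) ^ (1-t) * (2*z + j) ^ t ≤ (1-t)*(2*x+j) + t*(2*z+j) := this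
        _ = 2*a + j := by rw [ha]; ring
    have hgm : (0:ℝ) < (2*x + j) ^ (1-t) * (2*z + j) ^ t := by positivity
    have step1 : (j/2)/(2*a + j) ≤ (j/2) / ((2*x + j) ^ (1-t) * (2*z + j) ^ t) :=
      div_le_div_of_nonneg_left (by linarith) hgm amgm
    have step2 : (j/2) / ((2*x + j) ^ (1-t) * (2*z + j) ^ t)
        = ((j/2)/(2*x+j)) ^ (1-t) * ((j/2)/(2*z+j)) ^ t := by
      rw [Real.div_rpow (by linarith) hxj.le, Real.div_rpow (by linarith) hzj.le,
        div_mul_div_comm, ← Real.rpow_add (by linarith : (0:ℝ) < j/2)]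
      norm_num
    have step3 : 1/2 + ((j/2)/(2*x+j)) ^ (1-t) * ((j/2)/(2*z+j)) ^ t
        ≤ (1/2 + (j/2)/(2*x+j)) ^ (1-t) * (1/2 + (j/2)/(2*z+j)) ^ t := by
      have h := holder2 (by norm_num : (0:ℝ) < 1/2) (by norm_num : (0:ℝ) < 1/2)
        (by positivity : (0:ℝ) ≤ (j/2)/(2*x+j)) (by positivity : (0:ℝ) ≤ (j/2)/(2*z+j)) ht0 ht1
      have e : (1/2:ℝ) ^ (1-t) * (1/2:ℝ) ^ t = 1/2 := by
        rw [← Real.rpow_add (by norm_num : (0:ℝ) < 1/2)]; norm_num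
      linarith
    rw [factor_decomp hapos j hj, factor_decomp hx j hj, factor_decomp hz j hj]
    calc 1/2 + (j/2)/(2*a + j) ≤ 1/2 + ((j/2)/(2*x+j)) ^ (1-t) * ((j/2)/(2*z+j)) ^ t := by
          rw [← step2]; linarith
      _ ≤ _ := step3

lemma factor_ineq_strict {x z t : ℝ} (hx : 0 < x) (hxz : x < z) (ht0 : 0 < t) (ht1 : t < 1)
    (j : ℝ) (hjpos : 0 < j) :
    (((1-t)*x + t*z) + j)/(2*((1-t)*x + t*z) + j)
      < ((x + j)/(2*x + j)) ^ (1-t) * ((z + j)/(2*z + j)) ^ t := by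
  set a := (1-t)*x + t*z with ha
  have hz : 0 < z := lt_trans hx hxz
  have hapos : 0 < a := by
    rcases le_total x z with h | h
    · nlinarith [mul_nonneg ht0.le (by linarith : (0:ℝ) ≤ z - x)]
    · nlinarith [mul_nonneg (by linarith : (0:ℝ) ≤ 1-t) (by linarith : (0:ℝ) ≤ x - z)]
  have hxj : (0:ℝ) < 2*x + j := by linarith
  have hzj : (0:ℝ) < 2*z + j := by linarith
  have haj : (0:ℝ) < 2*a + j := by linarith
  have amgm : (2*x + j) ^ (1-t) * (2*z + j) ^ t < 2*a + j := by
    have := amgm_strict hxj hzj (by intro h; linarith) ht0 ht1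
    calc (2*x + j) ^ (1-t) * (2*z + j) ^ t < (1-t)*(2*x+j) + t*(2*z+j) := this
      _ = 2*a + j := by rw [ha]; ring
  have hgm : (0:ℝ) < (2*x + j) ^ (1-t) * (2*z + j) ^ t := by positivity
  have step1 : (j/2)/(2*a + j) < (j/2) / ((2*x + j) ^ (1-t) * (2*z + j) ^ t) :=
    div_lt_div_of_pos_left (by linarith) hgm amgm
  have step2 : (j/2) / ((2*x + j) ^ (1-t) * (2*z + j) ^ t)
      = ((j/2)/(2*x+j)) ^ (1-t) * ((j/2)/(2*z+j)) ^ t := by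
    rw [Real.div_rpow (by linarith) hxj.le, Real.div_rpow (by linarith) hzj.le,
      div_mul_div_comm, ← Real.rpow_add (by linarith : (0:ℝ) < j/2)]
    norm_num
  have step3 : 1/2 + ((j/2)/(2*x+j)) ^ (1-t) * ((j/2)/(2*z+j)) ^ t
      ≤ (1/2 + (j/2)/(2*x+j)) ^ (1-t) * (1/2 + (j/2)/(2*z+j)) ^ t := by
    have h := holder2 (by norm_num : (0:ℝ) < 1/2) (by norm_num : (0:ℝ) < 1/2)
      (by positivity : (0:ℝ) ≤ (j/2)/(2*x+j)) (by positivity : (0:ℝ) ≤ (j/2)/(2*z+j))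
      ht0.le ht1.le
    have e : (1/2:ℝ) ^ (1-t) * (1/2:ℝ) ^ t = 1/2 := by
      rw [← Real.rpow_add (by norm_num : (0:ℝ) < 1/2)]; norm_num
    linarith
  rw [factor_decomp hapos j hjpos.le, factor_decomp hx j hjpos.le, factor_decomp hz j hjpos.le]
  calc 1/2 + (j/2)/(2*a + j) < 1/2 + ((j/2)/(2*x+j)) ^ (1-t) * ((j/2)/(2*z+j)) ^ t := by
        rw [← step2]; linarith
    _ ≤ _ := step3

lemma combo_pos {x z t : ℝ} (hx : 0 < x) (hz : 0 < z) (ht0 : 0 ≤ t) (ht1 : t ≤ 1) :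
    0 < (1-t)*x + t*z := by
  rcases le_total x z with h | h
  · nlinarith [mul_nonneg ht0 (by linarith : (0:ℝ) ≤ z - x)]
  · nlinarith [mul_nonneg (by linarith : (0:ℝ) ≤ 1-t) (by linarith : (0:ℝ) ≤ x - z)]

lemma hh_one {s : ℝ} (hs : 0 < s) : hh 1 s = 1/2 := by
  have : (2*s) ≠ 0 := by positivity
  simp [hh, risingFactorial]
  field_simp

lemma hh_logconvex {x z t : ℝ} (hx : 0 < x) (hz : 0 < z) (ht0 : 0 ≤ t) (ht1 : t ≤ 1) :
    ∀ k, hh k ((1-t)*x + t*z) ≤ (hh k x) ^ (1-t) * (hh k z) ^ t := by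
  intro k
  have hapos := combo_pos hx hz ht0 ht1
  induction k with
  | zero => simp [hh_zero]
  | succ k ih =>
    rw [hh_succ hapos, hh_succ hx, hh_succ hz,
      Real.mul_rpow (hh_pos hx k).le
        (div_nonneg (by linarith [Nat.cast_nonneg (α := ℝ) k]) (by linarith [Nat.cast_nonneg (α := ℝ) k])),
      Real.mul_rpow (hh_pos hz k).le
        (div_nonneg (by linarith [Nat.cast_nonneg (α := ℝ) k]) (by linarith [Nat.cast_nonneg (α := ℝ) k]))]
    have hkc : (0:ℝ) ≤ (k:ℝ) := Nat.cast_nonneg k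
    have hf : 0 ≤ (((1-t)*x + t*z) + (k:ℝ))/(2*((1-t)*x + t*z) + (k:ℝ)) :=
      div_nonneg (by linarith) (by linarith)
    have hrp : 0 ≤ (hh k x) ^ (1-t) * (hh k z) ^ t :=
      mul_nonneg (Real.rpow_nonneg (hh_pos hx k).le _) (Real.rpow_nonneg (hh_pos hz k).le _)
    calc hh k ((1-t)*x + t*z) * ((((1-t)*x + t*z) + (k:ℝ))/(2*((1-t)*x + t*z) + (k:ℝ)))
        ≤ ((hh k x) ^ (1-t) * (hh k z) ^ t) *
          (((x + k)/(2*x + k)) ^ (1-t) * ((z + k)/(2*z + k)) ^ t) :=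
          mul_le_mul ih (factor_ineq hx hz ht0 ht1 k (Nat.cast_nonneg k)) hf hrp
      _ = hh k x ^ (1-t) * ((x + k)/(2*x + k)) ^ (1-t) *
          (hh k z ^ t * ((z + k)/(2*z + k)) ^ t) := by ring

lemma hh_logconvex_strict {x z t : ℝ} (hx : 0 < x) (hxz : x < z) (ht0 : 0 < t) (ht1 : t < 1) :
    ∀ k, 2 ≤ k → hh k ((1-t)*x + t*z) < (hh k x) ^ (1-t) * (hh k z) ^ t := by
  have hz : 0 < z := lt_trans hx hxz
  have hapos := combo_pos hx hz ht0.le ht1.le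
  intro k hk
  induction k, hk using Nat.le_induction with
  | base =>
    have e1 : hh 2 ((1-t)*x + t*z)
        = hh 1 ((1-t)*x + t*z) * ((((1-t)*x + t*z) + (1:ℕ))/(2*((1-t)*x + t*z) + (1:ℕ))) :=
      hh_succ hapos 1
    rw [e1, hh_succ hx 1, hh_succ hz 1, hh_one hapos, hh_one hx, hh_one hz,
      Real.mul_rpow (by norm_num) (by positivity),
      Real.mul_rpow (by norm_num) (by positivity)]
    have ehalf : (1/2:ℝ) ^ (1-t) * (1/2:ℝ) ^ t = 1/2 := by
      rw [← Real.rpow_add (by norm_num : (0:ℝ) < 1/2)]; norm_num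
    have hstrict := factor_ineq_strict hx hxz ht0 ht1 (1:ℕ) (by norm_num)
    calc (1/2:ℝ) * ((((1-t)*x + t*z) + (1:ℕ))/(2*((1-t)*x + t*z) + (1:ℕ)))
        < (1/2:ℝ) * (((x + (1:ℕ))/(2*x + (1:ℕ))) ^ (1-t) * ((z + (1:ℕ))/(2*z + (1:ℕ))) ^ t) := by
          have : ((((1-t)*x + t*z) + (1:ℕ))/(2*((1-t)*x + t*z) + (1:ℕ)))
              < ((x + (1:ℕ))/(2*x + (1:ℕ))) ^ (1-t) * ((z + (1:ℕ))/(2*z + (1:ℕ))) ^ t := by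
            exact_mod_cast hstrict
          linarith
      _ = (1/2:ℝ) ^ (1-t) * ((x + (1:ℕ))/(2*x + (1:ℕ))) ^ (1-t) *
          ((1/2:ℝ) ^ t * ((z + (1:ℕ))/(2*z + (1:ℕ))) ^ t) := by
          rw [show (1/2:ℝ) ^ (1-t) * ((x + (1:ℕ))/(2*x + (1:ℕ))) ^ (1-t) *
              ((1/2:ℝ) ^ t * ((z + (1:ℕ))/(2*z + (1:ℕ))) ^ t)
            = ((1/2:ℝ) ^ (1-t) * (1/2:ℝ) ^ t) *
              (((x + (1:ℕ))/(2*x + (1:ℕ))) ^ (1-t) * ((z + (1:ℕ))/(2*z + (1:ℕ))) ^ t) by ring,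
            ehalf]
  | succ k hk ih =>
    rw [hh_succ hapos, hh_succ hx, hh_succ hz,
      Real.mul_rpow (hh_pos hx k).le
        (div_nonneg (by linarith [Nat.cast_nonneg (α := ℝ) k]) (by linarith [Nat.cast_nonneg (α := ℝ) k])),
      Real.mul_rpow (hh_pos hz k).le
        (div_nonneg (by linarith [Nat.cast_nonneg (α := ℝ) k]) (by linarith [Nat.cast_nonneg (α := ℝ) k]))]
    have hkc : (0:ℝ) ≤ (k:ℝ) := Nat.cast_nonneg k
    have hf : 0 < (((1-t)*x + t*z) + (k:ℝ))/(2*((1-t)*x + t*z) + (k:ℝ)) :=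
      div_pos (by linarith) (by linarith)
    have hrp : 0 ≤ (hh k x) ^ (1-t) * (hh k z) ^ t :=
      mul_nonneg (Real.rpow_nonneg (hh_pos hx k).le _) (Real.rpow_nonneg (hh_pos hz k).le _)
    calc hh k ((1-t)*x + t*z) * ((((1-t)*x + t*z) + (k:ℝ))/(2*((1-t)*x + t*z) + (k:ℝ)))
        < ((hh k x) ^ (1-t) * (hh k z) ^ t) *
          (((x + k)/(2*x + k)) ^ (1-t) * ((z + k)/(2*z + k)) ^ t) :=
          mul_lt_mul ih (factor_ineq hx hz ht0.le ht1.le k (Nat.cast_nonneg k)) hf hrp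
      _ = hh k x ^ (1-t) * ((x + k)/(2*x + k)) ^ (1-t) *
          (hh k z ^ t * ((z + k)/(2*z + k)) ^ t) := by ring

lemma pair_le {μ α β : ℝ} (hμ : 0 < μ) (hα : 0 < α) (hβ : 0 < β) (k l : ℕ) :
    hh k (μ+α) * hh l (μ+β) + hh l (μ+α) * hh k (μ+β)
      ≤ hh k μ * hh l (μ+α+β) + hh l μ * hh k (μ+α+β) := by
  have hab : (0:ℝ) < α + β := by linarith
  have hab' : (α+β) ≠ 0 := ne_of_gt hab
  set t := α/(α+β) with htdef
  have ht0 : 0 < t := div_pos hα hab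
  have ht1 : t < 1 := (div_lt_one hab).mpr (by linarith)
  have hz : 0 < μ+α+β := by linarith
  have ea : (1-t)*μ + t*(μ+α+β) = μ+α := by
    rw [htdef]
    field_simp
    ring
  have eb : (1-(1-t))*μ + (1-t)*(μ+α+β) = μ+β := by
    rw [htdef]
    field_simp
    ring
  have Hak := hh_logconvex hμ hz ht0.le ht1.le k
  have Hal := hh_logconvex hμ hz ht0.le ht1.le l
  have Hbk := hh_logconvex hμ hz (by linarith : (0:ℝ) ≤ 1-t) (by linarith : (1:ℝ)-t ≤ 1) k
  have Hbl := hh_logconvex hμ hz (by linarith : (0:ℝ) ≤ 1-t) (by linarith : (1:ℝ)-t ≤ 1) l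
  rw [ea] at Hak Hal
  rw [eb] at Hbk Hbl
  have e1t : 1-(1-t) = t := by ring
  rw [e1t] at Hbk Hbl
  set Pk := hh k μ with hPk
  set Pl := hh l μ with hPl
  set Zk := hh k (μ+α+β) with hZk
  set Zl := hh l (μ+α+β) with hZl
  have hPkp : 0 < Pk := hh_pos hμ k
  have hPlp : 0 < Pl := hh_pos hμ l
  have hZkp : 0 < Zk := hh_pos hz k
  have hZlp : 0 < Zl := hh_pos hz l
  have hak : 0 < hh k (μ+α) := hh_pos (by linarith) k
  have hal : 0 < hh l (μ+α) := hh_pos (by linarith) l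
  have hbk : 0 < hh k (μ+β) := hh_pos (by linarith) k
  have hbl : 0 < hh l (μ+β) := hh_pos (by linarith) l
  have m1 : hh k (μ+α) * hh l (μ+β) ≤ (Pk*Zl) ^ (1-t) * (Pl*Zk) ^ t := by
    have := mul_le_mul Hak Hbl hbl.le
      (mul_nonneg (Real.rpow_nonneg hPkp.le _) (Real.rpow_nonneg hZkp.le _))
    calc hh k (μ+α) * hh l (μ+β) ≤ Pk ^ (1-t) * Zk ^ t * (Pl ^ t * Zl ^ (1-t)) := this
      _ = (Pk*Zl) ^ (1-t) * (Pl*Zk) ^ t := by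
          rw [Real.mul_rpow hPkp.le hZlp.le, Real.mul_rpow hPlp.le hZkp.le]
          ring
  have m2 : hh l (μ+α) * hh k (μ+β) ≤ (Pk*Zl) ^ t * (Pl*Zk) ^ (1-t) := by
    have := mul_le_mul Hal Hbk hbk.le
      (mul_nonneg (Real.rpow_nonneg hPlp.le _) (Real.rpow_nonneg hZlp.le _))
    calc hh l (μ+α) * hh k (μ+β) ≤ Pl ^ (1-t) * Zl ^ t * (Pk ^ t * Zk ^ (1-t)) := this
      _ = (Pk*Zl) ^ t * (Pl*Zk) ^ (1-t) := by
          rw [Real.mul_rpow hPkp.le hZlp.le, Real.mul_rpow hPlp.le hZkp.le]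
          ring
  have hr := rearr (mul_pos hPkp hZlp) (mul_pos hPlp hZkp) ht0.le ht1.le
  nlinarith [m1, m2, hr]

lemma pair_lt {μ α β : ℝ} (hμ : 0 < μ) (hα : 0 < α) (hβ : 0 < β) (l : ℕ) (hl : 2 ≤ l) :
    hh l (μ+α) + hh l (μ+β) < hh l μ + hh l (μ+α+β) := by
  have hab : (0:ℝ) < α + β := by linarith
  have hab' : (α+β) ≠ 0 := ne_of_gt hab
  set t := α/(α+β) with htdef
  have ht0 : 0 < t := div_pos hα hab
  have ht1 : t < 1 := (div_lt_one hab).mpr (by linarith)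
  have hz : 0 < μ+α+β := by linarith
  have hμz : μ < μ+α+β := by linarith
  have ea : (1-t)*μ + t*(μ+α+β) = μ+α := by
    rw [htdef]
    field_simp
    ring
  have eb : (1-(1-t))*μ + (1-t)*(μ+α+β) = μ+β := by
    rw [htdef]
    field_simp
    ring
  have Hal := hh_logconvex_strict hμ hμz ht0 ht1 l hl
  have Hbl := hh_logconvex hμ hz (by linarith : (0:ℝ) ≤ 1-t) (by linarith : (1:ℝ)-t ≤ 1) l
  rw [ea] at Hal
  rw [eb] at Hbl
  have e1t : 1-(1-t) = t := by ring
  rw [e1t] at Hbl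
  have hr := rearr (hh_pos hμ l) (hh_pos hz l) ht0.le ht1.le
  linarith

lemma summand_pair_le (y : ℕ → ℝ) (hy : ∀ k, 0 ≤ y k) {μ α β : ℝ}
    (hμ : 0 < μ) (hα : 0 < α) (hβ : 0 < β) (k l : ℕ) :
    (coeff y k (μ+α) * coeff y l (μ+β) - coeff y k μ * coeff y l (μ+α+β))
      + (coeff y l (μ+α) * coeff y k (μ+β) - coeff y l μ * coeff y k (μ+α+β)) ≤ 0 := by
  have hc : 0 ≤ (y k / (Nat.factorial k : ℝ)) * (y l / (Nat.factorial l : ℝ)) :=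
    mul_nonneg (div_nonneg (hy k) (Nat.cast_nonneg _)) (div_nonneg (hy l) (Nat.cast_nonneg _))
  have hp := pair_le hμ hα hβ k l
  have key : (coeff y k (μ+α) * coeff y l (μ+β) - coeff y k μ * coeff y l (μ+α+β))
      + (coeff y l (μ+α) * coeff y k (μ+β) - coeff y l μ * coeff y k (μ+α+β))
      = ((y k / (Nat.factorial k : ℝ)) * (y l / (Nat.factorial l : ℝ)))
        * (hh k (μ+α) * hh l (μ+β) + hh l (μ+α) * hh k (μ+β)
          - hh k μ * hh l (μ+α+β) - hh l μ * hh k (μ+α+β)) := by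
    simp only [coeff_eq]
    ring
  rw [key]
  exact mul_nonpos_of_nonneg_of_nonpos hc (by linarith)

lemma summand_pair_lt (y : ℕ → ℝ) (hy' : ∀ k, 0 < y k) {μ α β : ℝ}
    (hμ : 0 < μ) (hα : 0 < α) (hβ : 0 < β) (m : ℕ) (hm : 2 ≤ m) :
    (coeff y 0 (μ+α) * coeff y m (μ+β) - coeff y 0 μ * coeff y m (μ+α+β))
      + (coeff y m (μ+α) * coeff y 0 (μ+β) - coeff y m μ * coeff y 0 (μ+α+β)) < 0 := by
  have hc : 0 < (y 0 / (Nat.factorial 0 : ℝ)) * (y m / (Nat.factorial m : ℝ)) :=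
    mul_pos (div_pos (hy' 0) (by norm_num))
      (div_pos (hy' m) (Nat.cast_pos.mpr (Nat.factorial_pos m)))
  have hp := pair_lt hμ hα hβ m hm
  have key : (coeff y 0 (μ+α) * coeff y m (μ+β) - coeff y 0 μ * coeff y m (μ+α+β))
      + (coeff y m (μ+α) * coeff y 0 (μ+β) - coeff y m μ * coeff y 0 (μ+α+β))
      = ((y 0 / (Nat.factorial 0 : ℝ)) * (y m / (Nat.factorial m : ℝ)))
        * (hh m (μ+α) + hh m (μ+β) - hh m μ - hh m (μ+α+β)) := by
    simp only [coeff_eq, hh_zero]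
    ring
  rw [key]
  exact mul_neg_of_pos_of_neg hc (by linarith)

lemma main_le (y : ℕ → ℝ) (hy : ∀ k, 0 ≤ y k) {μ α β : ℝ}
    (hμ : 0 < μ) (hα : 0 < α) (hβ : 0 < β) (m : ℕ) :
    ∑ k ∈ Finset.range (m + 1),
        (coeff y k (μ + α) * coeff y (m - k) (μ + β)
          - coeff y k μ * coeff y (m - k) (μ + α + β)) ≤ 0 := by
  set F : ℕ → ℝ := fun k => coeff y k (μ + α) * coeff y (m - k) (μ + β)
      - coeff y k μ * coeff y (m - k) (μ + α + β) with hF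
  have hrefl : ∑ k ∈ Finset.range (m+1), F (m - k) = ∑ k ∈ Finset.range (m+1), F k := by
    simpa using Finset.sum_range_reflect F (m+1)
  have key : ∀ k ∈ Finset.range (m+1), F k + F (m-k) ≤ 0 := by
    intro k hk
    have hk' : k ≤ m := Nat.lt_succ_iff.mp (Finset.mem_range.mp hk)
    have hsub : m - (m - k) = k := Nat.sub_sub_self hk'
    simp only [hF, hsub]
    exact summand_pair_le y hy hμ hα hβ k (m-k)
  have h2 : ∑ k ∈ Finset.range (m+1), (F k + F (m-k)) ≤ 0 := Finset.sum_nonpos key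
  rw [Finset.sum_add_distrib, hrefl] at h2
  linarith

lemma main_lt (y : ℕ → ℝ) (hy' : ∀ k, 0 < y k) {μ α β : ℝ}
    (hμ : 0 < μ) (hα : 0 < α) (hβ : 0 < β) (m : ℕ) (hm : 2 ≤ m) :
    ∑ k ∈ Finset.range (m + 1),
        (coeff y k (μ + α) * coeff y (m - k) (μ + β)
          - coeff y k μ * coeff y (m - k) (μ + α + β)) < 0 := by
  have hy : ∀ k, 0 ≤ y k := fun k => (hy' k).le
  set F : ℕ → ℝ := fun k => coeff y k (μ + α) * coeff y (m - k) (μ + β)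
      - coeff y k μ * coeff y (m - k) (μ + α + β) with hF
  have hrefl : ∑ k ∈ Finset.range (m+1), F (m - k) = ∑ k ∈ Finset.range (m+1), F k := by
    simpa using Finset.sum_range_reflect F (m+1)
  have key : ∀ k ∈ Finset.range (m+1), F k + F (m-k) ≤ (0:ℝ) := by
    intro k hk
    have hk' : k ≤ m := Nat.lt_succ_iff.mp (Finset.mem_range.mp hk)
    have hsub : m - (m - k) = k := Nat.sub_sub_self hk'
    simp only [hF, hsub]
    exact summand_pair_le y hy hμ hα hβ k (m-k)
  have strict0 : F 0 + F (m - 0) < 0 := by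
    simp only [hF, Nat.sub_zero, Nat.sub_self]
    exact summand_pair_lt y hy' hμ hα hβ m hm
  have h2 : ∑ k ∈ Finset.range (m+1), (F k + F (m-k))
      < ∑ _k ∈ Finset.range (m+1), (0:ℝ) :=
    Finset.sum_lt_sum key ⟨0, Finset.mem_range.mpr (by omega), strict0⟩
  rw [Finset.sum_const_zero, Finset.sum_add_distrib, hrefl] at h2
  linarith

theorem stmt_16 (y : ℕ → ℝ) (hy : ∀ k, 0 ≤ y k)
    (μ α β : ℝ) (hμ : 0 < μ) (hα : 0 < α) (hβ : 0 < β) :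
    (∀ m : ℕ,
      ∑ k ∈ Finset.range (m + 1),
        (coeff y k (μ + α) * coeff y (m - k) (μ + β)
          - coeff y k μ * coeff y (m - k) (μ + α + β)) ≤ 0) ∧
    ((∀ k, 0 < y k) → ∀ m : ℕ, 2 ≤ m →
      ∑ k ∈ Finset.range (m + 1),
        (coeff y k (μ + α) * coeff y (m - k) (μ + β)
          - coeff y k μ * coeff y (m - k) (μ + α + β)) < 0) :=
  ⟨fun m => main_le y hy hμ hα hβ m, fun hy' m hm => main_lt y hy' hμ hα hβ m hm⟩
end

section
/- Let q ≥ 1 and 0 ≤ r ≤ q be integers, and let a_1, …, a_{q−r} > 0 and b_1, …, b_q > 0 be real numbers satisfying the chain of inequalities e_{r+i}(b_1,…,b_q) · e_{i−1}(a_1,…,a_{q−r}) ≤ e_{r+i−1}(b_1,…,b_q) · e_i(a_1,…,a_{q−r}) for i = 1, …, q−r, together with e_{r+1}(b_1,…,b_q) ≤ e_r(b_1,…,b_q) · e_1(a_1,…,a_{q−r}) when r < q (i.e., the chain e_q(b)/e_{q−r}(a) ≤ e_{q−1}(b)/e_{q−r−1}(a) ≤ ⋯ ≤ e_{r+1}(b)/e_1(a)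 ≤ e_r(b)). Then the sequence f_n = (a_1)_n ⋯ (a_{q−r})_n / ( (b_1)_n ⋯ (b_q)_n ), n ≥ 0 (with numerator equal to 1 when r = q), is log-concave: 0 < f_{n−1} f_{n+1} ≤ f_n^2 for every n ≥ 1. -/
/-- The `k`-th elementary symmetric polynomial of `x_1, …, x_n`. -/
noncomputable def esymm {n : ℕ} (x : Fin n → ℝ) (k : ℕ) : ℝ :=
  ∑ s ∈ Finset.powersetCard k (Finset.univ : Finset (Fin n)), ∏ i ∈ s, x i

/-- The sequence of hypergeometric terms
`f_n = (a_1)_n ⋯ (a_{q−r})_n / ((b_1)_n ⋯ (b_q)_n)`. -/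
noncomputable def hypTerm {p q : ℕ} (a : Fin p → ℝ) (b : Fin q → ℝ) (n : ℕ) : ℝ :=
  (∏ j, risingFactorial (a j) n) / (∏ j, risingFactorial (b j) n)

open Finset

lemma risingFactorial_pos {μ : ℝ} (hμ : 0 < μ) (n : ℕ) : 0 < risingFactorial μ n := by
  induction n with
  | zero => norm_num [risingFactorial]
  | succ n ih =>
      exact mul_pos ih (add_pos_of_pos_of_nonneg hμ (Nat.cast_nonneg n))

lemma esymm_nonneg {n : ℕ} {x : Fin n → ℝ} (hx : ∀ j, 0 < x j) (k : ℕ) :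
    0 ≤ esymm x k :=
  Finset.sum_nonneg fun s _ => Finset.prod_nonneg fun i _ => (hx i).le

lemma esymm_pos {n : ℕ} {x : Fin n → ℝ} (hx : ∀ j, 0 < x j) {k : ℕ} (hk : k ≤ n) :
    0 < esymm x k := by
  apply Finset.sum_pos (fun s _ => Finset.prod_pos fun i _ => hx i)
  rw [Finset.nonempty_iff_ne_empty]
  intro h
  have := Finset.powersetCard_eq_empty.mp h
  simp at this
  omega

lemma prod_add_esymm {n : ℕ} (x : Fin n → ℝ) (t : ℝ) :
    ∏ j, (x j + t) = ∑ k ∈ range (n + 1), esymm x k * t ^ (n - k) := by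
  rw [Finset.prod_add]
  rw [show (Finset.univ : Finset (Fin n)).powerset =
      (range ((Finset.univ : Finset (Fin n)).card + 1)).disjiUnion
        (fun i => powersetCard i Finset.univ)
        ((Finset.univ : Finset (Fin n)).pairwise_disjoint_powersetCard.set_pairwise _)
      from Finset.powerset_card_disjiUnion _]
  erw [Finset.sum_disjiUnion]
  simp only [Finset.card_univ, Fintype.card_fin]
  refine Finset.sum_congr rfl fun k hk => ?_
  rw [esymm, Finset.sum_mul]
  refine Finset.sum_congr rfl fun s hs => ?_
  rw [Finset.prod_const]
  congr 1
  rw [Finset.card_sdiff_of_subset (Finset.mem_powersetCard.mp hs).1,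
    Finset.card_univ, Fintype.card_fin, (Finset.mem_powersetCard.mp hs).2]

lemma pow_cross {x y : ℝ} (hx : 0 ≤ x) (hxy : x ≤ y) {k m : ℕ} (hkm : k ≤ m) :
    x ^ m * y ^ k ≤ x ^ k * y ^ m := by
  have hy : 0 ≤ y := hx.trans hxy
  have h1 : x ^ m = x ^ k * x ^ (m - k) := by
    rw [← pow_add]; congr 1; omega
  have h2 : y ^ m = y ^ k * y ^ (m - k) := by
    rw [← pow_add]; congr 1; omega
  rw [h1, h2]
  calc x ^ k * x ^ (m - k) * y ^ k = x ^ k * y ^ k * x ^ (m - k) := by ring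
    _ ≤ x ^ k * y ^ k * y ^ (m - k) := by
        apply mul_le_mul_of_nonneg_left (pow_le_pow_left₀ hx hxy _) (by positivity)
    _ = x ^ k * (y ^ k * y ^ (m - k)) := by ring

theorem stmt_19 (q r : ℕ) (hq : 1 ≤ q) (hr : r ≤ q)
    (a : Fin (q - r) → ℝ) (b : Fin q → ℝ)
    (ha : ∀ j, 0 < a j) (hb : ∀ j, 0 < b j)
    (hchain : ∀ i : ℕ, 1 ≤ i → i ≤ q - r →
      esymm b (r + i) * esymm a (i - 1) ≤ esymm b (r + i - 1) * esymm a i)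
    (hlast : r < q → esymm b (r + 1) ≤ esymm b r * esymm a 1) :
    ∀ n : ℕ, 1 ≤ n →
      0 < hypTerm a b (n - 1) * hypTerm a b (n + 1) ∧
      hypTerm a b (n - 1) * hypTerm a b (n + 1) ≤ (hypTerm a b n) ^ 2 := by
  -- telescoped chain
  have key : ∀ d u : ℕ, u + d ≤ (q - r) →
      esymm b (r + (u + d)) * esymm a u ≤ esymm b (r + u) * esymm a (u + d) := by
    intro d
    induction d with
    | zero => intro u _; simp
    | succ d ih =>
        intro u hud
        have ih' := ih u (by omega)
        have hc := hchain (u + d + 1) (by omega) (by omega)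
        have e1 : r + (u + d + 1) - 1 = r + (u + d) := by omega
        have e2 : u + d + 1 - 1 = u + d := by omega
        rw [e1, e2] at hc
        have hX : 0 < esymm a (u + d) := esymm_pos ha (by omega)
        have hY : 0 ≤ esymm a (u + d + 1) := esymm_nonneg ha _
        have hZ : 0 ≤ esymm a u := esymm_nonneg ha _
        have h1 := mul_le_mul_of_nonneg_left hc hZ
        have h2 := mul_le_mul_of_nonneg_left ih' hY
        rw [show r + (u + Nat.succ d) = r + (u + d + 1) from by omega,
          show u + Nat.succ d = u + d + 1 from rfl]
        nlinarith [h1, h2, hX]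
  -- padded coefficients
  set A : ℕ → ℝ := fun k => if k ≤ (q - r) then esymm a ((q - r) - k) else 0 with hA
  set B : ℕ → ℝ := fun k => esymm b (q - k) with hB
  have hAnn : ∀ k, 0 ≤ A k := by
    intro k; simp only [hA]; split
    · exact esymm_nonneg ha _
    · exact le_refl 0
  have hBnn : ∀ k, 0 ≤ B k := fun k => esymm_nonneg hb _
  have hAB : ∀ k m : ℕ, k ≤ m → A m * B k ≤ A k * B m := by
    intro k m hkm
    by_cases hm : m ≤ (q - r)
    · have hk : k ≤ (q - r) := hkm.trans hm
      simp only [hA, hB, if_pos hm, if_pos hk]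
      have e1 : q - k = r + ((q - r) - k) := by omega
      have e2 : q - m = r + ((q - r) - m) := by omega
      rw [e1, e2]
      have := key (((q - r) - k) - ((q - r) - m)) ((q - r) - m) (by omega)
      rw [show (q - r) - m + (((q - r) - k) - ((q - r) - m)) = (q - r) - k from by omega] at this
      linarith [this]
    · simp only [hA, if_neg hm]
      rw [zero_mul]
      exact mul_nonneg (hAnn k) (hBnn m)
  -- expansions
  have hP : ∀ t : ℝ, ∏ j, (a j + t) = ∑ k ∈ range (q + 1), A k * t ^ k := by
    intro t
    rw [prod_add_esymm a t]
    rw [← Finset.sum_range_reflect]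
    have hswap : ∀ j ∈ range ((q - r) + 1),
        esymm a ((q - r) + 1 - 1 - j) * t ^ ((q - r) - ((q - r) + 1 - 1 - j)) = A j * t ^ j := by
      intro j hj
      rw [Finset.mem_range] at hj
      rw [show (q - r) + 1 - 1 - j = (q - r) - j from by omega,
        show (q - r) - ((q - r) - j) = j from by omega, hA]
      simp only [if_pos (by omega : j ≤ (q - r))]
    rw [Finset.sum_congr rfl hswap]
    apply Finset.sum_subset
    · exact Finset.range_subset_range.mpr (by omega)
    · intro j _ hj
      rw [Finset.mem_range, not_lt] at hj
      simp only [hA, if_neg (by omega : ¬ j ≤ (q - r))]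
      ring
  have hQ : ∀ t : ℝ, ∏ j, (b j + t) = ∑ k ∈ range (q + 1), B k * t ^ k := by
    intro t
    rw [prod_add_esymm b t]
    rw [← Finset.sum_range_reflect]
    refine Finset.sum_congr rfl fun j hj => ?_
    rw [Finset.mem_range] at hj
    rw [show q + 1 - 1 - j = q - j from by omega,
      show q - (q - j) = j from by omega, hB]
  -- the key polynomial inequality
  have keyIneq : ∀ x y : ℝ, 0 ≤ x → x ≤ y →
      (∏ j, (a j + y)) * (∏ j, (b j + x)) ≤ (∏ j, (a j + x)) * (∏ j, (b j + y)) := by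
    intro x y hx hxy
    rw [hP, hP, hQ, hQ, Finset.sum_mul_sum, Finset.sum_mul_sum]
    set F : ℕ → ℕ → ℝ := fun k m => A k * B m * (x ^ k * y ^ m - x ^ m * y ^ k) with hF
    have pair : ∀ k m : ℕ, 0 ≤ F k m + F m k := by
      intro k m
      rcases le_total k m with h | h
      · have h1 := hAB k m h
        have h2 := pow_cross hx hxy h
        have : F k m + F m k = (A k * B m - A m * B k) * (x ^ k * y ^ m - x ^ m * y ^ k) := by
          simp only [hF]; ring
        rw [this]
        exact mul_nonneg (by linarith) (by linarith)
      · have h1 := hAB m k h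
        have h2 := pow_cross hx hxy h
        have : F k m + F m k = (A m * B k - A k * B m) * (x ^ m * y ^ k - x ^ k * y ^ m) := by
          simp only [hF]; ring
        rw [this]
        exact mul_nonneg (by linarith) (by linarith)
    have hS : 0 ≤ ∑ k ∈ range (q + 1), ∑ m ∈ range (q + 1), F k m := by
      have hcomm : ∑ k ∈ range (q + 1), ∑ m ∈ range (q + 1), F m k
          = ∑ k ∈ range (q + 1), ∑ m ∈ range (q + 1), F k m := Finset.sum_comm
      have h2 : 0 ≤ ∑ k ∈ range (q + 1), ∑ m ∈ range (q + 1), (F k m + F m k) :=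
        Finset.sum_nonneg fun k _ => Finset.sum_nonneg fun m _ => pair k m
      have h3 : ∑ k ∈ range (q + 1), ∑ m ∈ range (q + 1), (F k m + F m k)
          = (∑ k ∈ range (q + 1), ∑ m ∈ range (q + 1), F k m)
            + ∑ k ∈ range (q + 1), ∑ m ∈ range (q + 1), F m k := by
        rw [← Finset.sum_add_distrib]
        exact Finset.sum_congr rfl fun k _ => Finset.sum_add_distrib
      rw [h3, hcomm] at h2
      linarith
    have hsplit : (∑ k ∈ range (q + 1), ∑ m ∈ range (q + 1), A k * y ^ k * (B m * x ^ m))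
        + ∑ k ∈ range (q + 1), ∑ m ∈ range (q + 1), F k m
        = ∑ k ∈ range (q + 1), ∑ m ∈ range (q + 1), A k * x ^ k * (B m * y ^ m) := by
      rw [← Finset.sum_add_distrib]
      refine Finset.sum_congr rfl fun k _ => ?_
      rw [← Finset.sum_add_distrib]
      refine Finset.sum_congr rfl fun m _ => ?_
      simp only [hF]; ring
    linarith [hsplit, hS]
  -- positivity and recurrences
  have hNa : ∀ n : ℕ, 0 < ∏ j, risingFactorial (a j) n :=
    fun n => Finset.prod_pos fun j _ => risingFactorial_pos (ha j) n
  have hNb : ∀ n : ℕ, 0 < ∏ j, risingFactorial (b j) n :=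
    fun n => Finset.prod_pos fun j _ => risingFactorial_pos (hb j) n
  have hPpos : ∀ n : ℕ, 0 < ∏ j, (a j + (n : ℝ)) :=
    fun n => Finset.prod_pos fun j _ => add_pos_of_pos_of_nonneg (ha j) (Nat.cast_nonneg n)
  have hQpos : ∀ n : ℕ, 0 < ∏ j, (b j + (n : ℝ)) :=
    fun n => Finset.prod_pos fun j _ => add_pos_of_pos_of_nonneg (hb j) (Nat.cast_nonneg n)
  have hrecA : ∀ n : ℕ, (∏ j, risingFactorial (a j) (n + 1))
      = (∏ j, risingFactorial (a j) n) * ∏ j, (a j + (n : ℝ)) := by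
    intro n
    rw [← Finset.prod_mul_distrib]
    rfl
  have hrecB : ∀ n : ℕ, (∏ j, risingFactorial (b j) (n + 1))
      = (∏ j, risingFactorial (b j) n) * ∏ j, (b j + (n : ℝ)) := by
    intro n
    rw [← Finset.prod_mul_distrib]
    rfl
  intro n hn
  obtain ⟨m, rfl⟩ : ∃ m, n = m + 1 := ⟨n - 1, by omega⟩
  simp only [Nat.add_sub_cancel]
  have hpos : 0 < hypTerm a b m * hypTerm a b (m + 1 + 1) :=
    mul_pos (div_pos (hNa m) (hNb m)) (div_pos (hNa _) (hNb _))
  refine ⟨hpos, ?_⟩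
  have K := keyIneq (m : ℝ) ((m : ℝ) + 1) (Nat.cast_nonneg m) (by linarith)
  have hcast : ((m + 1 : ℕ) : ℝ) = (m : ℝ) + 1 := by push_cast; ring
  rw [hypTerm, hypTerm, hypTerm, div_mul_div_comm, div_pow,
    div_le_div_iff₀ (mul_pos (hNb m) (hNb (m + 1 + 1))) (pow_pos (hNb (m + 1)) 2)]
  rw [show m + 1 + 1 = (m + 1) + 1 from rfl, hrecA (m + 1), hrecB (m + 1),
    hrecA m, hrecB m, hcast]
  nlinarith [mul_le_mul_of_nonneg_left K
      (le_of_lt (mul_pos (mul_pos (mul_pos (pow_pos (hNa m) 2) (hPpos m))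
        (pow_pos (hNb m) 2)) (hQpos m))),
    hNa m, hNb m, hPpos m, hQpos m, hPpos (m+1), hQpos (m+1)]
end
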